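/- For every integer n ≥ 0, the recurrence coefficients and auxiliary quantities satisfy r_{n+1}(t) + r_n(t) = t − α_n(t) R_n(t). -/

import Mathlib

open MeasureTheory Real Filter

/-- The singularly perturbed Laguerre-type weight `w(x;t) = x^λ e^{-x² - t/x}` on `(0,∞)`. -/
noncomputable def weight (lam t x : ℝ) : ℝ := x ^ lam * Real.exp (-x ^ 2 - t / x)

/-- The system of monic orthogonal polynomials with respect to the weight
`w(x;t) = x^λ e^{-x² - t/x}` on `(0,∞)` (for every `t > 0`), together with the
normalization constants `h n t` and the recurrence coefficients `α n t`, `β n t`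
of the three-term recurrence `x Pₙ = Pₙ₊₁ + αₙ Pₙ + βₙ Pₙ₋₁`, `P₀ = 1`, `β₀ P₋₁ = 0`. -/
structure SingLaguerreOPS (lam : ℝ) : Type where
  P : ℕ → ℝ → Polynomial ℝ
  h : ℕ → ℝ → ℝ
  α : ℕ → ℝ → ℝ
  β : ℕ → ℝ → ℝ
  /-- all moments `∫₀^∞ x^k w(x;t) dx`, `k ∈ ℤ`, converge -/
  moments : ∀ (k : ℤ) (t : ℝ), 0 < t →
    IntegrableOn (fun x : ℝ => x ^ k * weight lam t x) (Set.Ioi (0:ℝ))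
  monic : ∀ n t, 0 < t → (P n t).Monic
  natDegree_eq : ∀ n t, 0 < t → (P n t).natDegree = n
  h_pos : ∀ n t, 0 < t → 0 < h n t
  orth : ∀ m n t, 0 < t →
    ∫ x in Set.Ioi (0:ℝ), (P m t).eval x * (P n t).eval x * weight lam t x
      = if m = n then h n t else 0
  P_zero : ∀ t, 0 < t → P 0 t = 1
  recur : ∀ n t, 0 < t →
    Polynomial.X * P n t
      = P (n+1) t + Polynomial.C (α n t) * P n t
        + Polynomial.C (β n t) * (if n = 0 then 0 else P (n-1) t)

/-- The auxiliary quantity `Rₙ(t) = (t/hₙ) ∫₀^∞ y⁻¹ Pₙ(y)² w(y;t) dy`. -/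
noncomputable def Rn (lam : ℝ) (S : SingLaguerreOPS lam) (n : ℕ) (t : ℝ) : ℝ :=
  t / S.h n t * ∫ y in Set.Ioi (0:ℝ), ((S.P n t).eval y) ^ 2 * weight lam t y / y

/-- The auxiliary quantity `rₙ(t) = (t/hₙ₋₁) ∫₀^∞ y⁻¹ Pₙ(y) Pₙ₋₁(y) w(y;t) dy`
(with the convention `P₋₁ = 0`, so `r₀ = 0`). -/
noncomputable def rn (lam : ℝ) (S : SingLaguerreOPS lam) (n : ℕ) (t : ℝ) : ℝ :=
  t / S.h (n-1) t *
    ∫ y in Set.Ioi (0:ℝ),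
      (S.P n t).eval y * (if n = 0 then 0 else (S.P (n-1) t).eval y) * weight lam t y / y

/-- The derivative `v'(z) = 2z - λ/z - t/z²` of the potential `v(z) = z² + t/z - λ ln z`. -/
noncomputable def vprime (lam t z : ℝ) : ℝ := 2 * z - lam / z - t / z ^ 2

lemma intP (lam t : ℝ) (ht : 0 < t) (S : SingLaguerreOPS lam)
    (p : Polynomial ℝ) (k : ℤ) :
    IntegrableOn (fun x : ℝ => p.eval x * x ^ k * weight lam t x) (Set.Ioi 0) := by
  induction p using Polynomial.induction_on' with
  | add p q hp hq =>
      refine MeasureTheory.IntegrableOn.congr_fun (hp.add hq) (fun x hx => ?_) measurableSet_Ioi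
      simp [add_mul]
  | monomial i a =>
      refine MeasureTheory.IntegrableOn.congr_fun ((S.moments ((i : ℤ) + k) t ht).const_mul a)
        (fun x hx => ?_) measurableSet_Ioi
      have hx0 : (x : ℝ) ≠ 0 := ne_of_gt hx
      simp only [Polynomial.eval_monomial]
      rw [zpow_add₀ hx0, zpow_natCast]
      ring

lemma intPQ (lam t : ℝ) (ht : 0 < t) (S : SingLaguerreOPS lam)
    (p q : Polynomial ℝ) :
    IntegrableOn (fun x : ℝ => p.eval x * q.eval x * weight lam t x) (Set.Ioi 0) := by
  refine MeasureTheory.IntegrableOn.congr_fun (intP lam t ht S (p * q) 0) (fun x hx => ?_) measurableSet_Ioi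
  simp [Polynomial.eval_mul]

lemma intPQdiv (lam t : ℝ) (ht : 0 < t) (S : SingLaguerreOPS lam)
    (p q : Polynomial ℝ) :
    IntegrableOn (fun x : ℝ => p.eval x * q.eval x * weight lam t x / x) (Set.Ioi 0) := by
  refine MeasureTheory.IntegrableOn.congr_fun (intP lam t ht S (p * q) (-1)) (fun x hx => ?_) measurableSet_Ioi
  simp only [Polynomial.eval_mul, zpow_neg, zpow_one]
  rw [div_eq_mul_inv]
  ring

lemma beta_h (lam t : ℝ) (ht : 0 < t) (S : SingLaguerreOPS lam) (m : ℕ) :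
    S.β (m+1) t * S.h m t = S.h (m+1) t := by
  classical
  set w := weight lam t with hw
  have hrecm := S.recur m t ht
  have hrecm1 := S.recur (m+1) t ht
  set Qm : Polynomial ℝ := if m = 0 then 0 else S.P (m-1) t with hQm
  simp only [Nat.add_sub_cancel, Nat.succ_ne_zero, if_false] at hrecm1
  set F : ℝ → ℝ := fun y => Polynomial.eval y (S.P (m+1) t) * Polynomial.eval y (S.P (m+1) t) * w y with hF
  set G : ℝ → ℝ := fun y => S.α m t * (Polynomial.eval y (S.P m t) * Polynomial.eval y (S.P (m+1) t) * w y) with hG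
  set H : ℝ → ℝ := fun y => S.β m t * (Polynomial.eval y Qm * Polynomial.eval y (S.P (m+1) t) * w y) with hH
  have hFi : IntegrableOn F (Set.Ioi (0:ℝ)) := intPQ lam t ht S _ _
  have hGi : IntegrableOn G (Set.Ioi (0:ℝ)) := (intPQ lam t ht S (S.P m t) (S.P (m+1) t)).const_mul _
  have hHi : IntegrableOn H (Set.Ioi (0:ℝ)) := (intPQ lam t ht S Qm (S.P (m+1) t)).const_mul _
  have hA1 : (∫ y in Set.Ioi (0:ℝ), Polynomial.eval y (Polynomial.X * S.P m t) * Polynomial.eval y (S.P (m+1) t) * w y)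
      = S.h (m+1) t := by
    have heq : (fun y : ℝ => Polynomial.eval y (Polynomial.X * S.P m t) * Polynomial.eval y (S.P (m+1) t) * w y)
        = fun y => F y + G y + H y := by
      funext y
      rw [hrecm]
      simp only [hF, hG, hH, Polynomial.eval_add, Polynomial.eval_mul, Polynomial.eval_C,
        Polynomial.eval_X]
      ring
    rw [heq, MeasureTheory.integral_add (f := fun y => F y + G y) (g := H) (hFi.add hGi) hHi,
      MeasureTheory.integral_add (f := F) (g := G) hFi hGi]
    have o1 : (∫ y in Set.Ioi (0:ℝ), F y) = S.h (m+1) t := by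
      simpa using S.orth (m+1) (m+1) t ht
    have o2 : (∫ y in Set.Ioi (0:ℝ), G y) = 0 := by
      rw [hG, MeasureTheory.integral_const_mul]
      have := S.orth m (m+1) t ht
      simp only [hw] at this ⊢
      rw [this]
      simp
    have o3 : (∫ y in Set.Ioi (0:ℝ), H y) = 0 := by
      rw [hH, MeasureTheory.integral_const_mul]
      rcases Nat.eq_zero_or_pos m with hm | hm
      · subst hm; simp [hQm]
      · have hQ' : Qm = S.P (m-1) t := by rw [hQm, if_neg (Nat.pos_iff_ne_zero.mp hm)]
        rw [hQ']
        have := S.orth (m-1) (m+1) t ht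
        simp only [hw] at this ⊢
        rw [this]
        have : m - 1 ≠ m + 1 := by omega
        simp [this]
    rw [o1, o2, o3]; ring
  have hA2 : (∫ y in Set.Ioi (0:ℝ), Polynomial.eval y (Polynomial.X * S.P m t) * Polynomial.eval y (S.P (m+1) t) * w y)
      = S.β (m+1) t * S.h m t := by
    have heq : (fun y : ℝ => Polynomial.eval y (Polynomial.X * S.P m t) * Polynomial.eval y (S.P (m+1) t) * w y)
        = fun y => (Polynomial.eval y (S.P (m+2) t) * Polynomial.eval y (S.P m t) * w y)
          + S.α (m+1) t * (Polynomial.eval y (S.P (m+1) t) * Polynomial.eval y (S.P m t) * w y)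
          + S.β (m+1) t * (Polynomial.eval y (S.P m t) * Polynomial.eval y (S.P m t) * w y) := by
      funext y
      have : Polynomial.eval y (Polynomial.X * S.P (m+1) t)
          = Polynomial.eval y (S.P (m+1+1) t + Polynomial.C (S.α (m+1) t) * S.P (m+1) t
            + Polynomial.C (S.β (m+1) t) * S.P m t) := by rw [hrecm1]
      simp only [Polynomial.eval_add, Polynomial.eval_mul, Polynomial.eval_C, Polynomial.eval_X] at this ⊢
      linear_combination (Polynomial.eval y (S.P m t) * w y) * this
    rw [heq, MeasureTheory.integral_add
        (f := fun y => Polynomial.eval y (S.P (m+2) t) * Polynomial.eval y (S.P m t) * w y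
          + S.α (m+1) t * (Polynomial.eval y (S.P (m+1) t) * Polynomial.eval y (S.P m t) * w y))
        (g := fun y => S.β (m+1) t * (Polynomial.eval y (S.P m t) * Polynomial.eval y (S.P m t) * w y))
        ((intPQ lam t ht S (S.P (m+2) t) (S.P m t)).add
          ((intPQ lam t ht S (S.P (m+1) t) (S.P m t)).const_mul _))
        ((intPQ lam t ht S (S.P m t) (S.P m t)).const_mul _),
      MeasureTheory.integral_add
        (f := fun y => Polynomial.eval y (S.P (m+2) t) * Polynomial.eval y (S.P m t) * w y)
        (g := fun y => S.α (m+1) t * (Polynomial.eval y (S.P (m+1) t) * Polynomial.eval y (S.P m t) * w y))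
        (intPQ lam t ht S (S.P (m+2) t) (S.P m t))
        ((intPQ lam t ht S (S.P (m+1) t) (S.P m t)).const_mul _)]
    have o1 : (∫ y in Set.Ioi (0:ℝ), Polynomial.eval y (S.P (m+2) t) * Polynomial.eval y (S.P m t) * w y) = 0 := by
      have := S.orth (m+2) m t ht
      simp only [hw] at this ⊢
      rw [this]
      simp
    have o2 : (∫ y in Set.Ioi (0:ℝ), S.α (m+1) t * (Polynomial.eval y (S.P (m+1) t) * Polynomial.eval y (S.P m t) * w y)) = 0 := by
      rw [MeasureTheory.integral_const_mul]
      have := S.orth (m+1) m t ht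
      simp only [hw] at this ⊢
      rw [this]
      simp
    have o3 : (∫ y in Set.Ioi (0:ℝ), S.β (m+1) t * (Polynomial.eval y (S.P m t) * Polynomial.eval y (S.P m t) * w y)) = S.β (m+1) t * S.h m t := by
      rw [MeasureTheory.integral_const_mul]
      have := S.orth m m t ht
      simp only [hw] at this ⊢
      rw [this]
      simp
    rw [o1, o2, o3]; ring
  rw [← hA1, hA2]

theorem statement5 (lam t : ℝ) (hlam : 0 ≤ lam) (ht : 0 < t)
    (S : SingLaguerreOPS lam) (n : ℕ) :
    rn lam S (n+1) t + rn lam S n t = t - S.α n t * Rn lam S n t := by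
  classical
  set w := weight lam t with hw
  have hrec := S.recur n t ht
  set Q : Polynomial ℝ := if n = 0 then 0 else S.P (n-1) t with hQ
  have hn : S.h n t ≠ 0 := ne_of_gt (S.h_pos n t ht)
  have hn1 : S.h (n-1) t ≠ 0 := ne_of_gt (S.h_pos (n-1) t ht)
  set I : ℝ := ∫ y in Set.Ioi (0:ℝ),
    Polynomial.eval y (S.P n t) * Polynomial.eval y (S.P n t) * w y / y with hI
  set J : ℝ := ∫ y in Set.Ioi (0:ℝ),
    Polynomial.eval y Q * Polynomial.eval y (S.P n t) * w y / y with hJ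
  have hRn : Rn lam S n t = t / S.h n t * I := by
    rw [Rn, hI]
    congr 1
    apply MeasureTheory.setIntegral_congr_fun measurableSet_Ioi
    intro y hy
    simp [hw, pow_two]
  have hrnn : rn lam S n t = t / S.h (n-1) t * J := by
    rw [rn, hJ]
    congr 1
    apply MeasureTheory.setIntegral_congr_fun measurableSet_Ioi
    intro y hy
    have he : Polynomial.eval y Q = if n = 0 then 0 else Polynomial.eval y (S.P (n-1) t) := by
      rw [hQ, apply_ite (Polynomial.eval y)]; simp
    show Polynomial.eval y (S.P n t) * (if n = 0 then 0 else Polynomial.eval y (S.P (n-1) t))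
        * weight lam t y / y = Polynomial.eval y Q * Polynomial.eval y (S.P n t) * w y / y
    rw [he, hw]
    ring
  have key : (∫ y in Set.Ioi (0:ℝ),
      Polynomial.eval y (S.P (n+1) t) * Polynomial.eval y (S.P n t) * w y / y)
      = S.h n t - S.α n t * I - S.β n t * J := by
    have heq : Set.EqOn
        (fun y : ℝ => Polynomial.eval y (S.P (n+1) t) * Polynomial.eval y (S.P n t) * w y / y)
        (fun y : ℝ => Polynomial.eval y (S.P n t) * Polynomial.eval y (S.P n t) * w y
          - S.α n t * (Polynomial.eval y (S.P n t) * Polynomial.eval y (S.P n t) * w y / y)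
          - S.β n t * (Polynomial.eval y Q * Polynomial.eval y (S.P n t) * w y / y))
        (Set.Ioi (0:ℝ)) := by
      intro y hy
      have hy0 : y ≠ 0 := ne_of_gt hy
      have hPn1 : Polynomial.eval y (S.P (n+1) t)
          = y * Polynomial.eval y (S.P n t) - S.α n t * Polynomial.eval y (S.P n t)
            - S.β n t * Polynomial.eval y Q := by
        have := congrArg (Polynomial.eval y) hrec
        simp only [Polynomial.eval_add, Polynomial.eval_mul, Polynomial.eval_C,
          Polynomial.eval_X] at this
        linarith
      simp only
      rw [hPn1]
      field_simp
    rw [MeasureTheory.setIntegral_congr_fun measurableSet_Ioi heq,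
      MeasureTheory.integral_sub
        (f := fun y => Polynomial.eval y (S.P n t) * Polynomial.eval y (S.P n t) * w y
          - S.α n t * (Polynomial.eval y (S.P n t) * Polynomial.eval y (S.P n t) * w y / y))
        (g := fun y => S.β n t * (Polynomial.eval y Q * Polynomial.eval y (S.P n t) * w y / y))
        ((intPQ lam t ht S (S.P n t) (S.P n t)).sub
          ((intPQdiv lam t ht S (S.P n t) (S.P n t)).const_mul _))
        ((intPQdiv lam t ht S Q (S.P n t)).const_mul _),
      MeasureTheory.integral_sub
        (f := fun y => Polynomial.eval y (S.P n t) * Polynomial.eval y (S.P n t) * w y)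
        (g := fun y => S.α n t * (Polynomial.eval y (S.P n t) * Polynomial.eval y (S.P n t) * w y / y))
        (intPQ lam t ht S (S.P n t) (S.P n t))
        ((intPQdiv lam t ht S (S.P n t) (S.P n t)).const_mul _)]
    have o1 : (∫ y in Set.Ioi (0:ℝ),
        Polynomial.eval y (S.P n t) * Polynomial.eval y (S.P n t) * w y) = S.h n t := by
      simpa using S.orth n n t ht
    simp only [MeasureTheory.integral_const_mul, o1]
    rfl
  have hrn1 : rn lam S (n+1) t = t / S.h n t * (S.h n t - S.α n t * I - S.β n t * J) := by
    rw [rn]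
    simp only [Nat.add_sub_cancel, Nat.succ_ne_zero, if_false]
    rw [← key]
  rw [hrn1, hrnn, hRn]
  rcases Nat.eq_zero_or_pos n with h0 | hpos
  · have hJ0 : J = 0 := by
      rw [hJ]
      have hQ0 : Q = 0 := by rw [hQ, if_pos h0]
      simp [hQ0]
    subst h0
    rw [hJ0]
    field_simp
    ring
  · obtain ⟨m, rfl⟩ : ∃ m, n = m + 1 := ⟨n - 1, (Nat.succ_pred_eq_of_pos hpos).symm⟩
    have hb : S.β (m+1) t * S.h m t = S.h (m+1) t := beta_h lam t ht S m
    have hβ : S.β (m+1) t ≠ 0 := by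
      intro hc
      rw [hc, zero_mul] at hb
      exact ne_of_gt (S.h_pos (m+1) t ht) hb.symm
    simp only [Nat.add_sub_cancel] at hn1 ⊢
    rw [← hb]
    field_simp
    ring
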